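/- There exists an equivalence relation ∼ on ℕ (viewed as a generalized numbering on Kleene's first model K₁) such that K₁ is strongly ∼-extensional but ∼ is not algebraic. In fact, ∼ can be taken to extend ∼_e and to satisfy f ∼ g ⟺ (∀x, f·x ∼ g·x in the extended sense), and there are f ∼ g and z ∈ ℕ with z·f ≁ z·g. -/

import Mathlib

/-- Application in Kleene's first model `K₁`: `n·m = φₙ(m)`. -/
def K1 (n m : ℕ) : Part ℕ := (Denumerable.ofNat Nat.Partrec.Code n).eval m

/-- Extension of a relation on values to partial values: either both are
undefined, or both are defined with related values. -/
def PartRel {A : Type} (r : A → A → Prop) (x y : Part A) : Prop :=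
  (¬ x.Dom ∧ ¬ y.Dom) ∨ (∃ a ∈ x, ∃ b ∈ y, r a b)

/-- The equivalence `n ∼ₑ m` iff `φₙ(x) ≃ φₘ(x)` for all `x`. -/
def simEqK (n m : ℕ) : Prop := ∀ x : ℕ, K1 n x = K1 m x

/-- Post-fixed points of the extensionality operator. -/
def PostFix (r : ℕ → ℕ → Prop) : Prop :=
  ∀ f g, r f g → ∀ x, PartRel r (K1 f x) (K1 g x)

/-- The greatest fixed point: union of all post-fixed points. -/
def Rgfp (f g : ℕ) : Prop := ∃ r : ℕ → ℕ → Prop, PostFix r ∧ r f g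

theorem PartRel.mono {r s : ℕ → ℕ → Prop} (h : ∀ a b, r a b → s a b)
    {x y : Part ℕ} (hxy : PartRel r x y) : PartRel s x y := by
  rcases hxy with h1 | ⟨a, ha, b, hb, hab⟩
  · exact Or.inl h1
  · exact Or.inr ⟨a, ha, b, hb, h a b hab⟩

theorem Rgfp_post : PostFix Rgfp := by
  rintro f g ⟨r, hr, hfg⟩ x
  exact PartRel.mono (fun a b hab => ⟨r, hr, hab⟩) (hr f g hfg x)

theorem Rgfp_step {f g : ℕ} (h : ∀ x, PartRel Rgfp (K1 f x) (K1 g x)) : Rgfp f g := by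
  refine ⟨fun a b => Rgfp a b ∨ (a = f ∧ b = g), ?_, Or.inr ⟨rfl, rfl⟩⟩
  rintro a b (hab | ⟨rfl, rfl⟩) x
  · exact PartRel.mono (fun a b => Or.inl) (Rgfp_post a b hab x)
  · exact PartRel.mono (fun a b => Or.inl) (h x)

theorem Rgfp_refl (n : ℕ) : Rgfp n n := by
  refine ⟨Eq, ?_, rfl⟩
  rintro f g rfl x
  by_cases h : (K1 f x).Dom
  · exact Or.inr ⟨(K1 f x).get h, Part.get_mem h, (K1 f x).get h, Part.get_mem h, rfl⟩
  · exact Or.inl ⟨h, h⟩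

theorem Rgfp_symm {n m : ℕ} (h : Rgfp n m) : Rgfp m n := by
  refine ⟨fun a b => Rgfp b a, ?_, h⟩
  rintro a b hba x
  rcases Rgfp_post b a hba x with ⟨h1, h2⟩ | ⟨c, hc, d, hd, hcd⟩
  · exact Or.inl ⟨h2, h1⟩
  · exact Or.inr ⟨d, hd, c, hc, hcd⟩

theorem Rgfp_trans {n m k : ℕ} (h1 : Rgfp n m) (h2 : Rgfp m k) : Rgfp n k := by
  refine ⟨fun a c => ∃ b, Rgfp a b ∧ Rgfp b c, ?_, m, h1, h2⟩
  rintro a c ⟨b, hab, hbc⟩ x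
  rcases Rgfp_post a b hab x with ⟨ha, hb⟩ | ⟨u, hu, v, hv, huv⟩
  · rcases Rgfp_post b c hbc x with ⟨_, hc⟩ | ⟨v', hv', _, _, _⟩
    · exact Or.inl ⟨ha, hc⟩
    · exact absurd ((Part.dom_iff_mem).2 ⟨v', hv'⟩) hb
  · rcases Rgfp_post b c hbc x with ⟨hb', _⟩ | ⟨v', hv', w, hw, hvw⟩
    · exact absurd ((Part.dom_iff_mem).2 ⟨v, hv⟩) hb'
    · have : v = v' := Part.mem_unique hv hv'
      subst this
      exact Or.inr ⟨u, hu, w, hw, v, huv, hvw⟩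

open Nat.Partrec (Code)
open Nat.Partrec.Code

/-- A code (other than `zero`) for the constantly-zero function. -/
def czz : Code := Code.comp Code.zero Code.zero

theorem K1_zero (x : ℕ) : K1 0 x = Part.some 0 := by
  have h0 : (Denumerable.ofNat Code 0) = Code.zero := by
    have : (0 : ℕ) = Encodable.encode Code.zero := rfl
    rw [this, Denumerable.ofNat_encode]
  simp only [K1, h0]
  rfl

theorem K1_czz (x : ℕ) : K1 (Encodable.encode czz) x = Part.some 0 := by
  simp only [K1, Denumerable.ofNat_encode, czz, Code.eval]
  exact Part.bind_some _ _

/-- There is a code halting exactly on `0`. -/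
theorem exists_z : ∃ c : Code, ∀ n : ℕ,
    c.eval n = if n = 0 then Part.some 0 else Part.none := by
  have hp : Partrec fun n : ℕ => Nat.rfind fun _ : ℕ => Part.some (decide (n = 0)) := by
    apply Partrec.rfind
    apply Computable₂.partrec₂
    have : Computable fun n : ℕ => decide (n = 0) :=
      (Primrec₂.comp Primrec.eq.decide Primrec.id (Primrec.const 0)).to_comp
    exact Computable.comp this Computable.fst
  have hp' : Nat.Partrec fun n : ℕ => Nat.rfind fun _ : ℕ => Part.some (decide (n = 0)) :=
    Partrec.nat_iff.1 hp
  obtain ⟨c, hc⟩ := exists_code.1 hp'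
  refine ⟨c, fun n => ?_⟩
  rw [hc]
  by_cases h : n = 0
  · subst h
    simp only [if_pos rfl]
    apply Part.eq_some_iff.2
    exact Nat.mem_rfind.2 ⟨by simp, fun {m} hm => absurd hm (Nat.not_lt_zero m)⟩
  · rw [if_neg h]
    apply Part.eq_none_iff.2
    rintro a ha
    have := (Nat.mem_rfind.1 ha).1
    simp [h] at this

theorem strong_ext_not_algebraic :
    ∃ r : ℕ → ℕ → Prop, Equivalence r ∧
      (∀ n m : ℕ, simEqK n m → r n m) ∧
      (∀ f g : ℕ, r f g ↔ ∀ x : ℕ, PartRel r (K1 f x) (K1 g x)) ∧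
      (∀ f g : ℕ, (∀ x : ℕ, PartRel r (K1 f x) (K1 g x)) → r f g) ∧
      (∃ f g z : ℕ, r f g ∧ ¬ PartRel r (K1 z f) (K1 z g)) := by
  refine ⟨Rgfp, ⟨Rgfp_refl, Rgfp_symm, Rgfp_trans⟩, ?_, ?_, ?_, ?_⟩
  · intro n m h
    apply Rgfp_step
    intro x
    rw [h x]
    by_cases hd : (K1 m x).Dom
    · exact Or.inr ⟨(K1 m x).get hd, Part.get_mem hd, (K1 m x).get hd, Part.get_mem hd,
        Rgfp_refl _⟩
    · exact Or.inl ⟨hd, hd⟩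
  · exact fun f g => ⟨Rgfp_post f g, Rgfp_step⟩
  · exact fun f g => Rgfp_step
  · obtain ⟨c, hc⟩ := exists_z
    refine ⟨0, Encodable.encode czz, Encodable.encode c, ?_, ?_⟩
    · -- 0 and czz are hereditarily total, so Rgfp-related
      refine ⟨fun a b => (a = 0 ∨ a = Encodable.encode czz) ∧
        (b = 0 ∨ b = Encodable.encode czz), ?_, Or.inl rfl, Or.inr rfl⟩
      rintro a b ⟨ha, hb⟩ x
      have hva : K1 a x = Part.some 0 := by
        rcases ha with rfl | rfl
        · exact K1_zero x
        · exact K1_czz x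
      have hvb : K1 b x = Part.some 0 := by
        rcases hb with rfl | rfl
        · exact K1_zero x
        · exact K1_czz x
      rw [hva, hvb]
      exact Or.inr ⟨0, Part.mem_some 0, 0, Part.mem_some 0, Or.inl rfl, Or.inl rfl⟩
    · have hK : ∀ n, K1 (Encodable.encode c) n = c.eval n := by
        intro n; simp [K1, Denumerable.ofNat_encode]
      have hne : Encodable.encode czz ≠ 0 := by decide
      have h1 : K1 (Encodable.encode c) 0 = Part.some 0 := by
        rw [hK, hc]; simp
      have h2 : K1 (Encodable.encode c) (Encodable.encode czz) = Part.none := by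
        rw [hK, hc]; simp [hne]
      rw [h1, h2]
      rintro (⟨hd1, _⟩ | ⟨a, _, b, hb, _⟩)
      · exact hd1 trivial
      · exact Part.notMem_none b hb
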